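/- arXiv:2003.05800 — 3 statements merged into one kernel-verified Lean document; each statement's English description precedes it below -/
import Mathlib

section
/- For every Bohr almost periodic function f : ℝ → ℂ, the mean value M(f) := lim_{t→∞} (1/t) ∫₀ᵗ f(s) ds exists. -/
open Filter MeasureTheory

/-- A set `A ⊆ ℝ` is relatively dense if there exists `l > 0` such that every
interval of length `l` meets `A`. -/
def RelativelyDense (A : Set ℝ) : Prop :=
  ∃ l > (0 : ℝ), ∀ x : ℝ, ∃ τ ∈ A, τ ∈ Set.Icc x (x + l)

/-- `f` is Bohr almost periodic: `f` is continuous and, for every `ε > 0`, the set of its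
`ε`-almost periods is relatively dense. -/
def BohrAP {E : Type*} [NormedAddCommGroup E] (f : ℝ → E) : Prop :=
  Continuous f ∧ ∀ ε > (0 : ℝ), RelativelyDense {τ : ℝ | ∀ t : ℝ, ‖f (t + τ) - f t‖ ≤ ε}

variable {f : ℝ → ℂ}

lemma bohrAP_bounded' (hc : Continuous f)
    (hAP : ∀ ε > (0:ℝ), ∃ l > (0:ℝ), ∀ x : ℝ,
      ∃ τ ∈ {τ : ℝ | ∀ t : ℝ, ‖f (t + τ) - f t‖ ≤ ε}, τ ∈ Set.Icc x (x + l)) :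
    ∃ C : ℝ, 0 ≤ C ∧ ∀ t, ‖f t‖ ≤ C := by
  obtain ⟨l, hl, hA⟩ := hAP 1 one_pos
  obtain ⟨x0, -, hx0⟩ := (isCompact_Icc (a := (0:ℝ)) (b := l)).exists_isMaxOn
    (Set.nonempty_Icc.2 hl.le) hc.norm.continuousOn
  refine ⟨‖f x0‖ + 1, by positivity, fun t => ?_⟩
  obtain ⟨τ, hτ, hτI⟩ := hA (-t)
  have h1 : t + τ ∈ Set.Icc (0:ℝ) l := ⟨by linarith [hτI.1], by linarith [hτI.2]⟩
  calc ‖f t‖ = ‖f (t + τ) - (f (t + τ) - f t)‖ := by ring_nf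
    _ ≤ ‖f (t + τ)‖ + ‖f (t + τ) - f t‖ := norm_sub_le _ _
    _ ≤ ‖f x0‖ + 1 := add_le_add (hx0 h1) (hτ t)

lemma shift_est (hc : Continuous f) {C l ε : ℝ} (hC : ∀ t, ‖f t‖ ≤ C) (hl : 0 ≤ l)
    (hA : ∀ x : ℝ, ∃ τ ∈ {τ : ℝ | ∀ t : ℝ, ‖f (t + τ) - f t‖ ≤ ε}, τ ∈ Set.Icc x (x + l))
    (a T : ℝ) (hT : 0 ≤ T) :
    ‖(∫ s in a..(a+T), f s) - ∫ s in (0:ℝ)..T, f s‖ ≤ ε * T + 2 * (C * l) := by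
  have hC0 : 0 ≤ C := (norm_nonneg _).trans (hC 0)
  have hint : ∀ u v : ℝ, IntervalIntegrable f volume u v := fun u v =>
    hc.intervalIntegrable u v
  obtain ⟨τ, hτ, hτI⟩ := hA (-a)
  set b := a + τ with hb
  have hb0 : 0 ≤ b := by have := hτI.1; simp only [hb]; linarith
  have hbl : b ≤ l := by have := hτI.2; simp only [hb]; linarith
  have e1 : (∫ s in a..(a+T), f (s + τ)) = ∫ s in b..(b+T), f s := by
    rw [intervalIntegral.integral_comp_add_right]
    congr 1 <;> ring
  have h2 : ‖(∫ s in a..(a+T), f s) - ∫ s in b..(b+T), f s‖ ≤ ε * T := by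
    have hint2 : IntervalIntegrable (fun s => f (s + τ)) volume a (a + T) :=
      (hc.comp (continuous_id.add continuous_const)).intervalIntegrable _ _
    rw [← e1, ← intervalIntegral.integral_sub (hint _ _) hint2]
    have := intervalIntegral.norm_integral_le_of_norm_le_const
      (a := a) (b := a + T) (C := ε) (f := fun s => f s - f (s + τ))
      (fun x _ => by simpa [norm_sub_rev] using hτ x)
    calc ‖∫ s in a..(a+T), (f s - f (s + τ))‖ ≤ ε * |a + T - a| := this
      _ = ε * T := by rw [show a + T - a = T by ring, abs_of_nonneg hT]
  have h3 : (∫ s in b..(b+T), f s) - ∫ s in (0:ℝ)..T, f s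
      = (∫ s in T..(b+T), f s) - ∫ s in (0:ℝ)..b, f s := by
    have A : (∫ s in (0:ℝ)..b, f s) + ∫ s in b..(b+T), f s = ∫ s in (0:ℝ)..(b+T), f s :=
      intervalIntegral.integral_add_adjacent_intervals (hint _ _) (hint _ _)
    have B : (∫ s in (0:ℝ)..T, f s) + ∫ s in T..(b+T), f s = ∫ s in (0:ℝ)..(b+T), f s :=
      intervalIntegral.integral_add_adjacent_intervals (hint _ _) (hint _ _)
    linear_combination A - B
  have bnd : ∀ u v : ℝ, v = u + b → ‖∫ s in u..v, f s‖ ≤ C * l := by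
    intro u v hv
    calc ‖∫ s in u..v, f s‖ ≤ C * |v - u| :=
          intervalIntegral.norm_integral_le_of_norm_le_const (fun x _ => hC x)
      _ = C * b := by rw [hv]; rw [show u + b - u = b by ring, abs_of_nonneg hb0]
      _ ≤ C * l := by nlinarith
  have h4 : ‖(∫ s in b..(b+T), f s) - ∫ s in (0:ℝ)..T, f s‖ ≤ 2 * (C * l) := by
    rw [h3]
    calc ‖(∫ s in T..(b+T), f s) - ∫ s in (0:ℝ)..b, f s‖
        ≤ ‖∫ s in T..(b+T), f s‖ + ‖∫ s in (0:ℝ)..b, f s‖ := norm_sub_le _ _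
      _ ≤ C * l + C * l := add_le_add (bnd _ _ (by ring)) (bnd _ _ (by ring))
      _ = 2 * (C * l) := by ring
  calc ‖(∫ s in a..(a+T), f s) - ∫ s in (0:ℝ)..T, f s‖
      = ‖((∫ s in a..(a+T), f s) - ∫ s in b..(b+T), f s)
        + ((∫ s in b..(b+T), f s) - ∫ s in (0:ℝ)..T, f s)‖ := by ring_nf
    _ ≤ _ := norm_add_le _ _
    _ ≤ ε * T + 2 * (C * l) := add_le_add h2 h4

lemma blocks_est (hc : Continuous f) {C l ε : ℝ} (hC : ∀ t, ‖f t‖ ≤ C) (hl : 0 ≤ l)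
    (hA : ∀ x : ℝ, ∃ τ ∈ {τ : ℝ | ∀ t : ℝ, ‖f (t + τ) - f t‖ ≤ ε}, τ ∈ Set.Icc x (x + l))
    (S : ℝ) (hS : 0 ≤ S) (n : ℕ) :
    ‖(∫ s in (0:ℝ)..(n*S), f s) - (n : ℂ) * ∫ s in (0:ℝ)..S, f s‖
      ≤ n * (ε * S + 2 * (C * l)) := by
  have hint : ∀ u v : ℝ, IntervalIntegrable f volume u v := fun u v =>
    hc.intervalIntegrable u v
  induction n with
  | zero => simp
  | succ n ih =>
    have A : (∫ s in (0:ℝ)..(n*S), f s) + ∫ s in (n*S:ℝ)..(n*S+S), f s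
        = ∫ s in (0:ℝ)..((n+1:ℕ)*S), f s := by
      rw [show ((n+1:ℕ):ℝ)*S = n*S+S by push_cast; ring]
      exact intervalIntegral.integral_add_adjacent_intervals (hint _ _) (hint _ _)
    have h1 := shift_est hc hC hl hA (n*S) S hS
    calc ‖(∫ s in (0:ℝ)..((n+1:ℕ)*S), f s) - ((n+1:ℕ) : ℂ) * ∫ s in (0:ℝ)..S, f s‖
        = ‖((∫ s in (0:ℝ)..(n*S), f s) - (n : ℂ) * ∫ s in (0:ℝ)..S, f s)
          + ((∫ s in (n*S:ℝ)..(n*S+S), f s) - ∫ s in (0:ℝ)..S, f s)‖ := by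
          rw [← A]; push_cast; ring_nf
      _ ≤ _ := norm_add_le _ _
      _ ≤ n * (ε * S + 2 * (C * l)) + (ε * S + 2 * (C * l)) := add_le_add ih h1
      _ = (n+1:ℕ) * (ε * S + 2 * (C * l)) := by push_cast; ring

lemma key_est (hc : Continuous f) {C l ε : ℝ} (hC : ∀ t, ‖f t‖ ≤ C) (hl : 0 ≤ l)
    (hε : 0 < ε)
    (hA : ∀ x : ℝ, ∃ τ ∈ {τ : ℝ | ∀ t : ℝ, ‖f (t + τ) - f t‖ ≤ ε}, τ ∈ Set.Icc x (x + l))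
    (S T : ℝ) (hS0 : 0 < S) (hST : S ≤ T) :
    ‖(T:ℂ)⁻¹ * (∫ s in (0:ℝ)..T, f s) - (S:ℂ)⁻¹ * ∫ s in (0:ℝ)..S, f s‖
      ≤ 2 * (C * S / T) + ε + 2 * C * l / S := by
  have hC0 : 0 ≤ C := (norm_nonneg _).trans (hC 0)
  have hT0 : 0 < T := hS0.trans_le hST
  have hint : ∀ u v : ℝ, IntervalIntegrable f volume u v := fun u v =>
    hc.intervalIntegrable u v
  set n : ℕ := ⌊T / S⌋₊ with hn
  have hq : (n : ℝ) ≤ T / S := Nat.floor_le (by positivity)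
  have hqS : T / S * S = T := div_mul_cancel₀ T hS0.ne'
  have hnS : (n : ℝ) * S ≤ T := by nlinarith
  have hTn : T ≤ (n : ℝ) * S + S := by
    have := Nat.lt_floor_add_one (T / S)
    nlinarith
  have normT : ‖((T:ℝ) : ℂ)⁻¹‖ = 1 / T := by
    rw [norm_inv, Complex.norm_real, Real.norm_eq_abs, abs_of_pos hT0, one_div]
  -- term 1
  have adj : (∫ s in (0:ℝ)..((n:ℝ)*S), f s) + ∫ s in ((n:ℝ)*S)..T, f s
      = ∫ s in (0:ℝ)..T, f s :=
    intervalIntegral.integral_add_adjacent_intervals (hint _ _) (hint _ _)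
  have t1 : ‖(T:ℂ)⁻¹ * ((∫ s in (0:ℝ)..T, f s) - ∫ s in (0:ℝ)..((n:ℝ)*S), f s)‖
      ≤ C * S / T := by
    rw [norm_mul, normT]
    have h1 : ‖(∫ s in (0:ℝ)..T, f s) - ∫ s in (0:ℝ)..((n:ℝ)*S), f s‖ ≤ C * S := by
      rw [show (∫ s in (0:ℝ)..T, f s) - ∫ s in (0:ℝ)..((n:ℝ)*S), f s
          = ∫ s in ((n:ℝ)*S)..T, f s by linear_combination -adj]
      calc ‖∫ s in ((n:ℝ)*S)..T, f s‖ ≤ C * |T - (n:ℝ)*S| :=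
            intervalIntegral.norm_integral_le_of_norm_le_const (fun x _ => hC x)
        _ ≤ C * S := by rw [abs_of_nonneg (by linarith)]; nlinarith
    calc 1 / T * ‖(∫ s in (0:ℝ)..T, f s) - ∫ s in (0:ℝ)..((n:ℝ)*S), f s‖
        ≤ 1 / T * (C * S) := by
          apply mul_le_mul_of_nonneg_left h1 (by positivity)
      _ = C * S / T := by ring
  -- term 2
  have t2 : ‖(T:ℂ)⁻¹ * ((∫ s in (0:ℝ)..((n:ℝ)*S), f s) - (n : ℂ) * ∫ s in (0:ℝ)..S, f s)‖
      ≤ ε + 2 * C * l / S := by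
    rw [norm_mul, normT]
    have h2 := blocks_est hc hC hl hA S hS0.le n
    calc 1 / T * ‖(∫ s in (0:ℝ)..((n:ℝ)*S), f s) - (n : ℂ) * ∫ s in (0:ℝ)..S, f s‖
        ≤ 1 / T * ((n : ℝ) * (ε * S + 2 * (C * l))) := by
          apply mul_le_mul_of_nonneg_left h2 (by positivity)
      _ ≤ ε + 2 * C * l / S := by
          rw [one_div, inv_mul_le_iff₀ hT0]
          have b1 : (n : ℝ) * (ε * S) ≤ ε * T := by nlinarith
          have b2 : 2 * (C * l) * (n : ℝ) ≤ 2 * (C * l) * (T / S) :=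
            mul_le_mul_of_nonneg_left hq (by positivity)
          have e : T * (ε + 2 * C * l / S) = ε * T + 2 * (C * l) * (T / S) := by
            field_simp
          linarith [b1, b2, e]
  -- term 3
  have t3 : ‖((n : ℂ) * (T:ℂ)⁻¹ - (S:ℂ)⁻¹) * ∫ s in (0:ℝ)..S, f s‖ ≤ C * S / T := by
    rw [norm_mul]
    have hsc : (n : ℂ) * (T:ℂ)⁻¹ - (S:ℂ)⁻¹ = (((n : ℝ) / T - 1 / S : ℝ) : ℂ) := by
      push_cast; ring
    have habs : ‖((n : ℂ) * (T:ℂ)⁻¹ - (S:ℂ)⁻¹)‖ ≤ 1 / T := by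
      rw [hsc, Complex.norm_real, Real.norm_eq_abs, abs_le]
      constructor
      · rw [neg_le_sub_iff_le_add]
        have h' : ((n:ℝ) + 1) / T = (n:ℝ) / T + 1 / T := add_div _ _ _
        have h'' : 1 / S ≤ ((n:ℝ) + 1) / T := by
          rw [div_le_div_iff₀ hS0 hT0]; nlinarith
        linarith
      · have h1 : (n : ℝ) / T ≤ 1 / S := by
          rw [div_le_div_iff₀ hT0 hS0]; nlinarith
        have h1T : (0:ℝ) ≤ 1 / T := by positivity
        linarith

    have hIS : ‖∫ s in (0:ℝ)..S, f s‖ ≤ C * S := by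
      calc ‖∫ s in (0:ℝ)..S, f s‖ ≤ C * |S - 0| :=
            intervalIntegral.norm_integral_le_of_norm_le_const (fun x _ => hC x)
        _ = C * S := by rw [sub_zero, abs_of_pos hS0]
    calc ‖(n : ℂ) * (T:ℂ)⁻¹ - (S:ℂ)⁻¹‖ * ‖∫ s in (0:ℝ)..S, f s‖
        ≤ (1 / T) * (C * S) := by
          apply mul_le_mul habs hIS (norm_nonneg _) (by positivity)
      _ = C * S / T := by ring
  calc ‖(T:ℂ)⁻¹ * (∫ s in (0:ℝ)..T, f s) - (S:ℂ)⁻¹ * ∫ s in (0:ℝ)..S, f s‖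
      = ‖(T:ℂ)⁻¹ * ((∫ s in (0:ℝ)..T, f s) - ∫ s in (0:ℝ)..((n:ℝ)*S), f s)
        + (T:ℂ)⁻¹ * ((∫ s in (0:ℝ)..((n:ℝ)*S), f s) - (n : ℂ) * ∫ s in (0:ℝ)..S, f s)
        + ((n : ℂ) * (T:ℂ)⁻¹ - (S:ℂ)⁻¹) * ∫ s in (0:ℝ)..S, f s‖ := by ring_nf
    _ ≤ ‖(T:ℂ)⁻¹ * ((∫ s in (0:ℝ)..T, f s) - ∫ s in (0:ℝ)..((n:ℝ)*S), f s)
        + (T:ℂ)⁻¹ * ((∫ s in (0:ℝ)..((n:ℝ)*S), f s) - (n : ℂ) * ∫ s in (0:ℝ)..S, f s)‖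
        + ‖((n : ℂ) * (T:ℂ)⁻¹ - (S:ℂ)⁻¹) * ∫ s in (0:ℝ)..S, f s‖ := norm_add_le _ _
    _ ≤ (‖(T:ℂ)⁻¹ * ((∫ s in (0:ℝ)..T, f s) - ∫ s in (0:ℝ)..((n:ℝ)*S), f s)‖
        + ‖(T:ℂ)⁻¹ * ((∫ s in (0:ℝ)..((n:ℝ)*S), f s) - (n : ℂ) * ∫ s in (0:ℝ)..S, f s)‖)
        + ‖((n : ℂ) * (T:ℂ)⁻¹ - (S:ℂ)⁻¹) * ∫ s in (0:ℝ)..S, f s‖ :=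
          add_le_add (norm_add_le _ _) le_rfl
    _ ≤ (C * S / T + (ε + 2 * C * l / S)) + C * S / T := add_le_add (add_le_add t1 t2) t3
    _ = 2 * (C * S / T) + ε + 2 * C * l / S := by ring

/-- The mean value `M(f) = lim_{t→∞} (1/t) ∫₀ᵗ f(s) ds` of a Bohr almost periodic
function `f : ℝ → ℂ` exists. -/
theorem mean_value_of_bohrAP (f : ℝ → ℂ) (hf : BohrAP f) :
    ∃ M : ℂ, Tendsto (fun t : ℝ => (t : ℂ)⁻¹ • ∫ s in (0:ℝ)..t, f s) atTop (nhds M) := by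
  obtain ⟨hc, hap⟩ := hf
  obtain ⟨C, hC0, hC⟩ := bohrAP_bounded' hc hap
  refine cauchy_map_iff_exists_tendsto.mp ?_
  refine Metric.cauchy_iff.2 ⟨map_neBot, fun δ hδ => ?_⟩
  set ε := δ / 7 with hεdef
  have hε0 : 0 < ε := by positivity
  obtain ⟨l, hl0, hA⟩ := hap ε hε0
  set S := max 1 (2 * C * l / ε) with hSdef
  have hS0 : (0:ℝ) < S := lt_of_lt_of_le one_pos (le_max_left _ _)
  have hS2 : 2 * C * l / S ≤ ε := by
    rw [div_le_iff₀ hS0]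
    calc 2 * C * l = ε * (2 * C * l / ε) := by field_simp
      _ ≤ ε * S := mul_le_mul_of_nonneg_left (le_max_right _ _) hε0.le
  set T₀ := max S (2 * C * S / ε) with hT₀def
  have hT₀S : S ≤ T₀ := le_max_left _ _
  have key : ∀ T, T₀ ≤ T →
      ‖(T:ℂ)⁻¹ * (∫ s in (0:ℝ)..T, f s) - (S:ℂ)⁻¹ * ∫ s in (0:ℝ)..S, f s‖ ≤ 3 * ε := by
    intro T hT
    have hST : S ≤ T := le_trans hT₀S hT
    have hT0 : 0 < T := lt_of_lt_of_le hS0 hST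
    have h2 : 2 * (C * S / T) ≤ ε := by
      have e : 2 * (C * S / T) = 2 * C * S / T := by ring
      rw [e, div_le_iff₀ hT0]
      have h1 : 2 * C * S / ε ≤ T := le_trans (le_max_right _ _) hT
      calc 2 * C * S = ε * (2 * C * S / ε) := by field_simp
        _ ≤ ε * T := mul_le_mul_of_nonneg_left h1 hε0.le
    calc ‖(T:ℂ)⁻¹ * (∫ s in (0:ℝ)..T, f s) - (S:ℂ)⁻¹ * ∫ s in (0:ℝ)..S, f s‖
        ≤ 2 * (C * S / T) + ε + 2 * C * l / S := key_est hc hC hl0.le hε0 hA S T hS0 hST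
      _ ≤ 3 * ε := by linarith
  refine ⟨(fun t : ℝ => (t : ℂ)⁻¹ • ∫ s in (0:ℝ)..t, f s) '' Set.Ici T₀,
    image_mem_map (Ici_mem_atTop T₀), ?_⟩
  rintro x ⟨T₁, hT₁, rfl⟩ y ⟨T₂, hT₂, rfl⟩
  rw [dist_eq_norm]
  simp only [smul_eq_mul]
  have k1 := key T₁ hT₁
  have k2 := key T₂ hT₂
  calc ‖(T₁:ℂ)⁻¹ * (∫ s in (0:ℝ)..T₁, f s) - (T₂:ℂ)⁻¹ * ∫ s in (0:ℝ)..T₂, f s‖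
      = ‖((T₁:ℂ)⁻¹ * (∫ s in (0:ℝ)..T₁, f s) - (S:ℂ)⁻¹ * ∫ s in (0:ℝ)..S, f s)
        - ((T₂:ℂ)⁻¹ * (∫ s in (0:ℝ)..T₂, f s) - (S:ℂ)⁻¹ * ∫ s in (0:ℝ)..S, f s)‖ := by
        ring_nf
    _ ≤ _ := norm_sub_le _ _
    _ ≤ 3 * ε + 3 * ε := add_le_add k1 k2
    _ < δ := by rw [hεdef]; linarith
end

section
/- Let S(t) = exp(At) satisfy ‖S(t)‖_op ≤ c_S e^{−m_S t} for t ≥ 0, and let b : ℝ × ℝ^d → ℝ^d be continuous, Lipschitz in the second variable with constant c_b, with linear growth ‖b(t,x)‖ ≤ m_b(1+‖x‖), and such that t ↦ b(t,x) is Bohr almost periodic uniformly with respect to x in compact sets. If c_S c_b/m_S < 1, then the unique bounded continuous solution x of x(t) = ∫_{−∞}^t S(t−s) b(s,x(s)) ds is Bohr almost periodic. -/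
open Filter MeasureTheory

/-- `b(t,x)` is Bohr almost periodic in `t` uniformly with respect to `x` in compact sets. -/
def UnifBohrAP {E F : Type*} [NormedAddCommGroup E] [NormedAddCommGroup F]
    (b : ℝ → E → F) : Prop :=
  ∀ K : Set E, IsCompact K → ∀ ε > (0 : ℝ), RelativelyDense
    {τ : ℝ | ∀ t : ℝ, ∀ x ∈ K, ‖b (t + τ) x - b t x‖ ≤ ε}

lemma int_exp_Ioi (m a : ℝ) (hm : 0 < m) :
    ∫ u in Set.Ioi a, Real.exp (-m * u) = Real.exp (-m * a) / m := by
  have hder : ∀ u : ℝ, HasDerivAt (fun u => -Real.exp (-m * u) / m) (Real.exp (-m * u)) u := by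
    intro u
    have := (((hasDerivAt_id u).const_mul (-m)).exp.neg).div_const m
    refine this.congr_deriv ?_
    simp only [id]
    field_simp
  have htend : Tendsto (fun u => -Real.exp (-m * u) / m) atTop (nhds 0) := by
    have : Tendsto (fun u : ℝ => -m * u) atTop atBot :=
      tendsto_id.const_mul_atTop_of_neg (by linarith)
    have h2 := (Real.tendsto_exp_atBot.comp this).neg.div_const m
    simpa using h2
  have := integral_Ioi_of_hasDerivAt_of_tendsto
    ((hder a).continuousAt.continuousWithinAt) (fun x _ => hder x)
    (exp_neg_integrableOn_Ioi a hm) htend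
  rw [this]; ring

lemma neg_comp_Iic {E : Type*} [NormedAddCommGroup E] (f : ℝ → E) (t : ℝ)
    (hf : IntegrableOn f (Set.Ioi (-t))) :
    IntegrableOn (fun s => f (-s)) (Set.Iic t) := by
  have hemb : MeasurableEmbedding (fun s : ℝ => -s) :=
    (Homeomorph.neg ℝ).isClosedEmbedding.measurableEmbedding
  have hmp : MeasurePreserving (fun s : ℝ => -s)
      (volume.restrict (Set.Iio t)) (volume.restrict (Set.Ioi (-t))) := by
    have := (Measure.measurePreserving_neg (volume : Measure ℝ)).restrict_preimage_emb hemb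
      (Set.Ioi (-t))
    simpa using this
  rw [integrableOn_Iic_iff_integrableOn_Iio]
  exact hmp.integrable_comp_emb hemb |>.mpr hf

lemma exp_decay_integrableOn (m t : ℝ) (hm : 0 < m) :
    MeasureTheory.IntegrableOn (fun s => Real.exp (-m * (t - s))) (Set.Iic t) := by
  have : ∀ s : ℝ, Real.exp (-m * (t - s)) = Real.exp (-m * t) * Real.exp (-m * (-s)) := by
    intro s; rw [← Real.exp_add]; ring_nf
  simp_rw [this]
  refine Integrable.const_mul ?_ _
  exact neg_comp_Iic (fun u => Real.exp (-m * u)) t (exp_neg_integrableOn_Ioi _ hm)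

lemma exp_decay_integral (m t : ℝ) (hm : 0 < m) :
    ∫ s in Set.Iic t, Real.exp (-m * (t - s)) = 1 / m := by
  have : ∀ s : ℝ, Real.exp (-m * (t - s)) = Real.exp (-m * t) * Real.exp (-m * (-s)) := by
    intro s; rw [← Real.exp_add]; ring_nf
  simp_rw [this]
  rw [integral_const_mul]
  rw [integral_comp_neg_Iic t (fun u => Real.exp (-m * u)), int_exp_Ioi m (-t) hm,
    mul_div_assoc', ← Real.exp_add]
  norm_num

lemma shift_setIntegral {E : Type*} [NormedAddCommGroup E] [NormedSpace ℝ E]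
    (f : ℝ → E) (t τ : ℝ) :
    ∫ s in Set.Iic t, f (s + τ) = ∫ s in Set.Iic (t + τ), f s := by
  have hemb : MeasurableEmbedding (fun s : ℝ => s + τ) :=
    (Homeomorph.addRight τ).isClosedEmbedding.measurableEmbedding
  have h := (measurePreserving_add_right volume τ).setIntegral_preimage_emb hemb f
    (Set.Iic (t + τ))
  rw [show (fun s : ℝ => s + τ) ⁻¹' Set.Iic (t + τ) = Set.Iic t from by
    ext s; simp] at h
  exact h

lemma op_integrable {d : ℕ} (A : EuclideanSpace ℝ (Fin d) →L[ℝ] EuclideanSpace ℝ (Fin d))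
    {cS mS : ℝ} (hcS : 0 < cS) (hmS : 0 < mS)
    (hS : ∀ t : ℝ, 0 ≤ t → ‖NormedSpace.exp (t • A)‖ ≤ cS * Real.exp (-mS * t))
    (t : ℝ) (u : ℝ → EuclideanSpace ℝ (Fin d)) (hu : Continuous u)
    (B : ℝ) (hB : ∀ s, ‖u s‖ ≤ B) :
    IntegrableOn (fun s => (NormedSpace.exp ((t - s) • A)) (u s)) (Set.Iic t) := by
  have hB0 : 0 ≤ B := le_trans (norm_nonneg _) (hB 0)
  have hc : Continuous (fun s => (NormedSpace.exp ((t - s) • A)) (u s)) := by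
    letI : NormedAlgebra ℚ (EuclideanSpace ℝ (Fin d) →L[ℝ] EuclideanSpace ℝ (Fin d)) :=
      NormedAlgebra.restrictScalars ℚ ℝ _
    exact (NormedSpace.exp_continuous.comp
      ((continuous_const.sub continuous_id).smul continuous_const)).clm_apply hu
  refine Integrable.mono' (((exp_decay_integrableOn mS t hmS).const_mul (cS * B)))
    hc.aestronglyMeasurable.restrict ?_
  rw [ae_restrict_iff' measurableSet_Iic]
  filter_upwards with s hs
  have h1 : ‖(NormedSpace.exp ((t - s) • A)) (u s)‖ ≤
      ‖NormedSpace.exp ((t - s) • A)‖ * ‖u s‖ := ContinuousLinearMap.le_opNorm _ _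
  have h2 := hS (t - s) (by simp at hs; linarith)
  calc ‖(NormedSpace.exp ((t - s) • A)) (u s)‖
      ≤ ‖NormedSpace.exp ((t - s) • A)‖ * ‖u s‖ := h1
    _ ≤ (cS * Real.exp (-mS * (t - s))) * B :=
        mul_le_mul h2 (hB s) (norm_nonneg _) (by positivity)
    _ = cS * B * Real.exp (-mS * (t - s)) := by ring

/-- The unique bounded continuous solution of `x(t) = ∫_{-∞}^t e^{(t-s)A} b(s,x(s)) ds`, with
`b` almost periodic uniformly on compacta and `c_S c_b / m_S < 1`, is Bohr almost periodic. -/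
theorem almost_periodic_solution {d : ℕ}
    (A : EuclideanSpace ℝ (Fin d) →L[ℝ] EuclideanSpace ℝ (Fin d))
    (cS mS cb mb : ℝ) (hcS : 0 < cS) (hmS : 0 < mS) (hcb : 0 < cb) (hmb : 0 < mb)
    (hS : ∀ t : ℝ, 0 ≤ t → ‖NormedSpace.exp (t • A)‖ ≤ cS * Real.exp (-mS * t))
    (b : ℝ → EuclideanSpace ℝ (Fin d) → EuclideanSpace ℝ (Fin d))
    (hbcont : Continuous (Function.uncurry b))
    (hlip : ∀ (t : ℝ) (x y : EuclideanSpace ℝ (Fin d)), ‖b t x - b t y‖ ≤ cb * ‖x - y‖)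
    (hgrowth : ∀ (t : ℝ) (x : EuclideanSpace ℝ (Fin d)), ‖b t x‖ ≤ mb * (1 + ‖x‖))
    (hbap : UnifBohrAP b)
    (hratio : cS * cb / mS < 1)
    (x : ℝ → EuclideanSpace ℝ (Fin d))
    (hxc : Continuous x) (hxb : ∃ C, ∀ t, ‖x t‖ ≤ C)
    (hsol : ∀ t : ℝ, x t = ∫ s in Set.Iic t, (NormedSpace.exp ((t - s) • A)) (b s (x s))) :
    BohrAP x := by
  obtain ⟨C, hC⟩ := hxb
  have hC0 : 0 ≤ C := le_trans (norm_nonneg _) (hC 0)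
  have hmcb : cS * cb < mS := (div_lt_one hmS).mp hratio
  have hpos : 0 < mS - cS * cb := by linarith
  refine ⟨hxc, ?_⟩
  intro ε hε
  set δ := ε * (mS - cS * cb) / cS with hδdef
  have hδ : 0 < δ := div_pos (mul_pos hε hpos) hcS
  obtain ⟨l, hl, hrd⟩ :=
    hbap (Metric.closedBall (0 : EuclideanSpace ℝ (Fin d)) C) (isCompact_closedBall _ _) δ hδ
  refine ⟨l, hl, fun r => ?_⟩
  obtain ⟨τ, hτ, hmem⟩ := hrd r
  simp only [Set.mem_setOf_eq] at hτ
  refine ⟨τ, ?_, hmem⟩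
  simp only [Set.mem_setOf_eq]
  -- bounds on b(s, x(s))
  have hbbd : ∀ s : ℝ, ‖b s (x s)‖ ≤ mb * (1 + C) := fun s =>
    le_trans (hgrowth s (x s)) (by nlinarith [hC s])
  have hbbd' : ∀ s : ℝ, ‖b (s + τ) (x (s + τ))‖ ≤ mb * (1 + C) := fun s => hbbd (s + τ)
  have hxτ : Continuous (fun s : ℝ => s + τ) := continuous_id.add continuous_const
  have hu1c : Continuous (fun s : ℝ => b (s + τ) (x (s + τ))) :=
    hbcont.comp (hxτ.prodMk (hxc.comp hxτ))
  have hu2c : Continuous (fun s : ℝ => b s (x s)) :=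
    hbcont.comp (continuous_id.prodMk hxc)
  -- the sup
  set M := sSup (Set.range fun s : ℝ => ‖x (s + τ) - x s‖) with hMdef
  have hbdd : BddAbove (Set.range fun s : ℝ => ‖x (s + τ) - x s‖) := by
    refine ⟨C + C, ?_⟩
    rintro _ ⟨s, rfl⟩
    exact le_trans (norm_sub_le _ _) (add_le_add (hC _) (hC _))
  have hMle : ∀ s : ℝ, ‖x (s + τ) - x s‖ ≤ M := fun s => le_csSup hbdd ⟨s, rfl⟩
  have hM0 : 0 ≤ M := le_trans (norm_nonneg _) (hMle 0)
  -- key estimate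
  have key : ∀ t : ℝ, ‖x (t + τ) - x t‖ ≤ cS * (cb * M + δ) / mS := by
    intro t
    have hint1 : IntegrableOn
        (fun s => (NormedSpace.exp ((t - s) • A)) (b (s + τ) (x (s + τ)))) (Set.Iic t) :=
      op_integrable A hcS hmS hS t _ hu1c (mb * (1 + C)) hbbd'
    have hint2 : IntegrableOn
        (fun s => (NormedSpace.exp ((t - s) • A)) (b s (x s))) (Set.Iic t) :=
      op_integrable A hcS hmS hS t _ hu2c (mb * (1 + C)) hbbd
    have hshift : x (t + τ)
        = ∫ s in Set.Iic t, (NormedSpace.exp ((t - s) • A)) (b (s + τ) (x (s + τ))) := by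
      rw [hsol (t + τ),
        ← shift_setIntegral (fun s => (NormedSpace.exp ((t + τ - s) • A)) (b s (x s))) t τ]
      simp only [add_sub_add_right_eq_sub]
    have hdiff : x (t + τ) - x t = ∫ s in Set.Iic t,
        ((NormedSpace.exp ((t - s) • A)) (b (s + τ) (x (s + τ)))
          - (NormedSpace.exp ((t - s) • A)) (b s (x s))) := by
      rw [hshift, integral_sub hint1 hint2]
      congr 1
      exact hsol t
    rw [hdiff]
    have hbound : ‖∫ s in Set.Iic t,
        ((NormedSpace.exp ((t - s) • A)) (b (s + τ) (x (s + τ)))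
          - (NormedSpace.exp ((t - s) • A)) (b s (x s)))‖
        ≤ ∫ s in Set.Iic t, cS * (cb * M + δ) * Real.exp (-mS * (t - s)) := by
      refine norm_integral_le_of_norm_le
        ((exp_decay_integrableOn mS t hmS).const_mul (cS * (cb * M + δ))) ?_
      rw [ae_restrict_iff' measurableSet_Iic]
      filter_upwards with s hs
      rw [← map_sub]
      have hinner : ‖b (s + τ) (x (s + τ)) - b s (x s)‖ ≤ cb * M + δ := by
        have h1 : ‖b (s + τ) (x (s + τ)) - b (s + τ) (x s)‖ ≤ cb * M :=
          le_trans (hlip (s + τ) _ _) (mul_le_mul_of_nonneg_left (hMle s) hcb.le)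
        have h2 : ‖b (s + τ) (x s) - b s (x s)‖ ≤ δ :=
          hτ s (x s) (mem_closedBall_zero_iff.mpr (hC s))
        calc ‖b (s + τ) (x (s + τ)) - b s (x s)‖
            ≤ ‖b (s + τ) (x (s + τ)) - b (s + τ) (x s)‖
              + ‖b (s + τ) (x s) - b s (x s)‖ := by
              have := norm_sub_le_norm_sub_add_norm_sub
                (b (s + τ) (x (s + τ))) (b (s + τ) (x s)) (b s (x s))
              linarith [norm_sub_le (b (s + τ) (x (s + τ)) - b (s + τ) (x s))
                (b s (x s) - b (s + τ) (x s))]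
          _ ≤ cb * M + δ := add_le_add h1 h2
      have h2 := hS (t - s) (by simp at hs; linarith)
      calc ‖(NormedSpace.exp ((t - s) • A)) (b (s + τ) (x (s + τ)) - b s (x s))‖
          ≤ ‖NormedSpace.exp ((t - s) • A)‖ * ‖b (s + τ) (x (s + τ)) - b s (x s)‖ :=
            ContinuousLinearMap.le_opNorm _ _
        _ ≤ (cS * Real.exp (-mS * (t - s))) * (cb * M + δ) :=
            mul_le_mul h2 hinner (norm_nonneg _) (by positivity)
        _ = cS * (cb * M + δ) * Real.exp (-mS * (t - s)) := by ring
    refine hbound.trans ?_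
    rw [integral_const_mul, exp_decay_integral mS t hmS]
    rw [mul_one_div]
  have hMb : M ≤ cS * (cb * M + δ) / mS := by
    refine Real.sSup_le ?_ (by positivity)
    rintro _ ⟨s, rfl⟩
    exact key s
  have hcSδ : cS * δ = ε * (mS - cS * cb) := by
    rw [hδdef]; field_simp
  have hMε : M ≤ ε := by
    rw [le_div_iff₀ hmS] at hMb
    nlinarith
  intro t
  exact (hMle t).trans hMε
end

section
/- Let S(t) = exp(At) with ‖S(t)‖_op ≤ c_S e^{−m_S t} for t ≥ 0, and let b : ℝ × ℝ^d → ℝ^d be continuous, c_b-Lipschitz in x, with ‖b(t,x)‖ ≤ m_b(1+‖x‖), and τ-periodic in t for some τ > 0 (uniformly in x). If c_S c_b/m_S < 1, then the unique bounded continuous solution x of x(t) = ∫_{−∞}^t S(t−s) b(s,x(s)) ds is τ-periodic. -/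
open Filter MeasureTheory

section aux

open Set Real

/-- Shift of a set integral over `Iic`. -/
lemma setIntegral_Iic_shift {E : Type*} [NormedAddCommGroup E] [NormedSpace ℝ E]
    (f : ℝ → E) (c τ : ℝ) :
    ∫ s in Iic (c + τ), f s = ∫ s in Iic c, f (s + τ) := by
  have A : MeasurableEmbedding (fun x : ℝ => x + τ) :=
    (Homeomorph.addRight τ).measurableEmbedding
  have h := A.setIntegral_map (μ := volume) f (Iic (c + τ))
  rw [map_add_right_eq_self (volume : Measure ℝ) τ] at h
  rw [h]
  congr 1
  ext x
  simp [Set.mem_preimage]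

lemma integrableOn_exp_mul_Iic' {m : ℝ} (hm : 0 < m) (t : ℝ) :
    IntegrableOn (fun s => Real.exp (m * s)) (Iic t) := by
  have A : MeasurableEmbedding (fun x : ℝ => -x) := (Homeomorph.neg ℝ).measurableEmbedding
  have h : IntegrableOn (fun s => Real.exp (-m * s)) (Ici (-t)) :=
    (integrableOn_Ici_iff_integrableOn_Ioi).mpr (exp_neg_integrableOn_Ioi (-t) hm)
  rw [← Measure.map_neg_eq_self (volume : Measure ℝ), A.integrableOn_map_iff]
  have hpre : ((fun x : ℝ => -x) ⁻¹' Iic t) = Ici (-t) := by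
    ext x; simp [neg_le]
  rw [hpre]
  refine h.congr_fun (fun s _ => ?_) measurableSet_Ici
  simp only [Function.comp_apply]
  ring_nf

lemma integral_exp_mul_Iic' {m : ℝ} (hm : 0 < m) (t : ℝ) :
    ∫ s in Iic t, Real.exp (m * s) = Real.exp (m * t) / m := by
  have h := integral_comp_neg_Iic t (fun u : ℝ => Real.exp (-(m * u)))
  simp only [mul_neg, neg_neg] at h
  have h2 := integral_comp_mul_left_Ioi (fun y : ℝ => Real.exp (-y)) (-t) hm
  simp only [smul_eq_mul] at h2
  rw [h, show (fun u : ℝ => Real.exp (-(m*u))) = (fun u : ℝ => (fun y => Real.exp (-y)) (m * u)) from rfl] at *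
  calc ∫ u in Ioi (-t), Real.exp (-(m * u)) = m⁻¹ * ∫ y in Ioi (m * -t), Real.exp (-y) := h2
    _ = m⁻¹ * Real.exp (-(m * -t)) := by rw [integral_exp_neg_Ioi]
    _ = Real.exp (m * t) / m := by rw [div_eq_inv_mul]; ring_nf

end aux

/-- The unique bounded continuous solution of `x(t) = ∫_{-∞}^t e^{(t-s)A} b(s,x(s)) ds`, with
`b` `τ`-periodic in `t` and `c_S c_b / m_S < 1`, is `τ`-periodic. -/
theorem periodic_solution {d : ℕ}
    (A : EuclideanSpace ℝ (Fin d) →L[ℝ] EuclideanSpace ℝ (Fin d))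
    (cS mS cb mb : ℝ) (hcS : 0 < cS) (hmS : 0 < mS) (hcb : 0 < cb) (hmb : 0 < mb)
    (hS : ∀ t : ℝ, 0 ≤ t → ‖NormedSpace.exp (t • A)‖ ≤ cS * Real.exp (-mS * t))
    (b : ℝ → EuclideanSpace ℝ (Fin d) → EuclideanSpace ℝ (Fin d))
    (hbcont : Continuous (Function.uncurry b))
    (hlip : ∀ (t : ℝ) (x y : EuclideanSpace ℝ (Fin d)), ‖b t x - b t y‖ ≤ cb * ‖x - y‖)
    (hgrowth : ∀ (t : ℝ) (x : EuclideanSpace ℝ (Fin d)), ‖b t x‖ ≤ mb * (1 + ‖x‖))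
    (τ : ℝ) (hτ : 0 < τ)
    (hper : ∀ (t : ℝ) (x : EuclideanSpace ℝ (Fin d)), b (t + τ) x = b t x)
    (hratio : cS * cb / mS < 1)
    (x : ℝ → EuclideanSpace ℝ (Fin d))
    (hxc : Continuous x) (hxb : ∃ C, ∀ t, ‖x t‖ ≤ C)
    (hsol : ∀ t : ℝ, x t = ∫ s in Set.Iic t, (NormedSpace.exp ((t - s) • A)) (b s (x s))) :
    ∀ t : ℝ, x (t + τ) = x t := by
  classical
  obtain ⟨C, hC⟩ := hxb
  have hC0 : 0 ≤ C := (norm_nonneg _).trans (hC 0)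
  set K : ℝ := cS * cb / mS with hK
  have hK0 : 0 ≤ K := by positivity
  -- supremum of differences
  set D : Set ℝ := Set.range (fun t => ‖x (t + τ) - x t‖) with hD
  have hDne : D.Nonempty := ⟨_, Set.mem_range_self 0⟩
  have hDbdd : BddAbove D := by
    refine ⟨2 * C, ?_⟩
    rintro r ⟨t, rfl⟩
    calc ‖x (t + τ) - x t‖ ≤ ‖x (t + τ)‖ + ‖x t‖ := norm_sub_le _ _
      _ ≤ C + C := add_le_add (hC _) (hC _)
      _ = 2 * C := by ring
  set B : ℝ := sSup D with hB
  have hle : ∀ t, ‖x (t + τ) - x t‖ ≤ B := fun t => le_csSup hDbdd ⟨t, rfl⟩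
  have hB0 : 0 ≤ B := (norm_nonneg _).trans (hle 0)
  -- continuity of integrands
  have hexpc : ∀ t : ℝ, Continuous (fun s : ℝ => NormedSpace.exp ((t - s) • A)) := by
    intro t
    exact (continuous_iff_continuousAt.2 (fun y => (NormedSpace.exp_analytic (𝕂 := ℝ) y).continuousAt)).comp ((continuous_const.sub continuous_id).smul continuous_const)
  have hcont : ∀ (t : ℝ) (y : ℝ → EuclideanSpace ℝ (Fin d)), Continuous y →
      Continuous (fun s : ℝ => (NormedSpace.exp ((t - s) • A)) (b s (y s))) := by
    intro t y hy
    exact (hexpc t).clm_apply (hbcont.comp (continuous_id.prodMk hy))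
  -- integrability of integrands
  have hintg : ∀ (t : ℝ) (y : ℝ → EuclideanSpace ℝ (Fin d)), Continuous y → (∀ s, ‖y s‖ ≤ C) →
      IntegrableOn (fun s : ℝ => (NormedSpace.exp ((t - s) • A)) (b s (y s))) (Set.Iic t) := by
    intro t y hy hyC
    have hdom : IntegrableOn
        (fun s : ℝ => (cS * (mb * (1 + C)) * Real.exp (-mS * t)) * Real.exp (mS * s))
        (Set.Iic t) := (integrableOn_exp_mul_Iic' hmS t).const_mul _
    refine Integrable.mono' hdom ((hcont t y hy).aestronglyMeasurable.restrict) ?_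
    refine (ae_restrict_iff' measurableSet_Iic).mpr (ae_of_all _ (fun s hs => ?_))
    have hts : (0 : ℝ) ≤ t - s := sub_nonneg.mpr hs
    calc ‖(NormedSpace.exp ((t - s) • A)) (b s (y s))‖
        ≤ ‖NormedSpace.exp ((t - s) • A)‖ * ‖b s (y s)‖ := ContinuousLinearMap.le_opNorm _ _
      _ ≤ (cS * Real.exp (-mS * (t - s))) * (mb * (1 + C)) := by
          apply mul_le_mul (hS _ hts) ((hgrowth s (y s)).trans ?_) (norm_nonneg _)
            (by positivity)
          have := hyC s
          nlinarith
      _ = (cS * (mb * (1 + C)) * Real.exp (-mS * t)) * Real.exp (mS * s) := by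
          rw [show -mS * (t - s) = -mS * t + mS * s by ring, Real.exp_add]; ring
  -- the shifted function solves the same equation
  have hshift : ∀ t : ℝ, x (t + τ) =
      ∫ s in Set.Iic t, (NormedSpace.exp ((t - s) • A)) (b s (x (s + τ))) := by
    intro t
    rw [hsol (t + τ), setIntegral_Iic_shift (fun s => (NormedSpace.exp ((t + τ - s) • A)) (b s (x s))) t τ]
    refine setIntegral_congr_fun measurableSet_Iic (fun s _ => ?_)
    rw [hper s (x (s + τ))]
    congr 2
    ring
  -- key estimate
  have key : ∀ t : ℝ, ‖x (t + τ) - x t‖ ≤ K * B := by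
    intro t
    have hxτc : Continuous (fun s : ℝ => x (s + τ)) := hxc.comp (continuous_id.add continuous_const)
    have hxτC : ∀ s : ℝ, ‖x (s + τ)‖ ≤ C := fun s => hC _
    have h1 := hintg t (fun s => x (s + τ)) hxτc hxτC
    have h2 := hintg t x hxc hC
    have heq : x (t + τ) - x t = ∫ s in Set.Iic t,
        ((NormedSpace.exp ((t - s) • A)) (b s (x (s + τ))) -
          (NormedSpace.exp ((t - s) • A)) (b s (x s))) := by
      rw [hshift t, hsol t, ← integral_sub h1 h2]
    rw [heq]
    have hdom : IntegrableOn
        (fun s : ℝ => (cS * (cb * B) * Real.exp (-mS * t)) * Real.exp (mS * s))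
        (Set.Iic t) := (integrableOn_exp_mul_Iic' hmS t).const_mul _
    have hbound : ‖∫ s in Set.Iic t,
        ((NormedSpace.exp ((t - s) • A)) (b s (x (s + τ))) -
          (NormedSpace.exp ((t - s) • A)) (b s (x s)))‖ ≤
        ∫ s in Set.Iic t, (cS * (cb * B) * Real.exp (-mS * t)) * Real.exp (mS * s) := by
      refine norm_integral_le_of_norm_le hdom ?_
      refine (ae_restrict_iff' measurableSet_Iic).mpr (ae_of_all _ (fun s hs => ?_))
      have hts : (0 : ℝ) ≤ t - s := sub_nonneg.mpr hs
      calc ‖(NormedSpace.exp ((t - s) • A)) (b s (x (s + τ))) -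
              (NormedSpace.exp ((t - s) • A)) (b s (x s))‖
          = ‖(NormedSpace.exp ((t - s) • A)) (b s (x (s + τ)) - b s (x s))‖ := by
            rw [map_sub]
        _ ≤ ‖NormedSpace.exp ((t - s) • A)‖ * ‖b s (x (s + τ)) - b s (x s)‖ :=
            ContinuousLinearMap.le_opNorm _ _
        _ ≤ (cS * Real.exp (-mS * (t - s))) * (cb * B) := by
            apply mul_le_mul (hS _ hts) ((hlip s _ _).trans ?_) (norm_nonneg _) (by positivity)
            exact mul_le_mul_of_nonneg_left (hle s) hcb.le
        _ = (cS * (cb * B) * Real.exp (-mS * t)) * Real.exp (mS * s) := by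
            rw [show -mS * (t - s) = -mS * t + mS * s by ring, Real.exp_add]; ring
    refine hbound.trans ?_
    rw [integral_const_mul, integral_exp_mul_Iic' hmS t]
    refine le_of_eq ?_
    have hone : Real.exp (-mS * t) * Real.exp (mS * t) = 1 := by
      rw [← Real.exp_add, show -mS * t + mS * t = 0 by ring, Real.exp_zero]
    calc cS * (cb * B) * Real.exp (-mS * t) * (Real.exp (mS * t) / mS)
        = cS * cb * B / mS * (Real.exp (-mS * t) * Real.exp (mS * t)) := by ring
      _ = K * B := by rw [hone, hK]; ring
  -- conclude
  have hBK : B ≤ K * B := csSup_le hDne (by rintro r ⟨t, rfl⟩; exact key t)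
  have hB0' : B ≤ 0 := by nlinarith
  intro t
  have := (hle t).trans hB0'
  have hz : ‖x (t + τ) - x t‖ = 0 := le_antisymm this (norm_nonneg _)
  exact sub_eq_zero.mp (norm_eq_zero.mp hz)
end
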